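/- Let H be a complex Hilbert space, e₁,…,e_m an orthonormal family in H, r_k, ρ_k ≥ 0 with ∑ₖ(r_k²+ρ_k²) > 0, and x₁,…,xₙ ∈ H satisfying r_k‖xⱼ‖ ≤ Re⟨eₖ,xⱼ⟩ and ρ_k‖xⱼ‖ ≤ Im⟨eₖ,xⱼ⟩ for all j,k. Then equality (∑ₖ(r_k²+ρ_k²))^{1/2} ∑ⱼ‖xⱼ‖ = ‖∑ⱼ xⱼ‖ holds if and only if ∑ⱼ xⱼ = (∑ⱼ‖xⱼ‖) ∑ₖ (r_k + iρ_k) eₖ. -/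

import Mathlib

theorem stmt12 {H : Type*} [NormedAddCommGroup H] [InnerProductSpace ℂ H]
    (m n : ℕ) (e : Fin m → H) (he : Orthonormal ℂ e) (x : Fin n → H)
    (r ρ : Fin m → ℝ) (hr : ∀ k, 0 ≤ r k) (hρ : ∀ k, 0 ≤ ρ k)
    (hS : 0 < ∑ k, (r k ^ 2 + ρ k ^ 2))
    (h₁ : ∀ j k, r k * ‖x j‖ ≤ (inner ℂ (e k) (x j) : ℂ).re)
    (h₂ : ∀ j k, ρ k * ‖x j‖ ≤ (inner ℂ (e k) (x j) : ℂ).im) :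
    Real.sqrt (∑ k, (r k ^ 2 + ρ k ^ 2)) * ∑ j, ‖x j‖ = ‖∑ j, x j‖ ↔
      ∑ j, x j = ((∑ j, ‖x j‖ : ℝ) : ℂ) • ∑ k, ((r k : ℂ) + (ρ k : ℂ) * Complex.I) • e k := by
  set c : Fin m → ℂ := fun k => (r k : ℂ) + (ρ k : ℂ) * Complex.I with hc
  set v : H := ∑ k, c k • e k with hv
  set T : H := ∑ j, x j with hT
  set L : ℝ := ∑ j, ‖x j‖ with hL
  set S : ℝ := ∑ k, (r k ^ 2 + ρ k ^ 2) with hSdef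
  have hL0 : 0 ≤ L := Finset.sum_nonneg fun j _ => norm_nonneg _
  -- ‖v‖² = S
  have hvv : (inner ℂ v v : ℂ) = (S : ℂ) := by
    rw [hv, he.inner_sum c c]
    push_cast [hSdef]
    congr 1
    ext k
    have : (starRingEnd ℂ) (c k) * c k = Complex.normSq (c k) := by
      rw [mul_comm, Complex.mul_conj]
    rw [this]
    simp [hc, Complex.normSq_apply]
    ring
  have hvnorm : ‖v‖ = Real.sqrt S := by
    have h1 : (‖v‖ : ℝ) ^ 2 = S := by
      have := inner_self_eq_norm_sq (𝕜 := ℂ) v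
      rw [hvv] at this
      simpa using this.symm
    rw [← h1, Real.sqrt_sq (norm_nonneg _)]
  -- Re⟨v, T⟩ ≥ S * L
  have hre : S * L ≤ (inner ℂ v T : ℂ).re := by
    have hvx : ∀ j, (S : ℝ) * ‖x j‖ ≤ (inner ℂ v (x j) : ℂ).re := by
      intro j
      have : (inner ℂ v (x j) : ℂ) = ∑ k, (starRingEnd ℂ) (c k) * inner ℂ (e k) (x j) := by
        rw [hv, sum_inner]
        simp [inner_smul_left]
      rw [this, Complex.re_sum, hSdef, Finset.sum_mul]
      apply Finset.sum_le_sum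
      intro k _
      have hconj : (starRingEnd ℂ) (c k) = (r k : ℂ) - (ρ k : ℂ) * Complex.I := by
        simp [hc]
        ring
      rw [hconj]
      have : (((r k : ℂ) - (ρ k : ℂ) * Complex.I) * inner ℂ (e k) (x j)).re
          = r k * (inner ℂ (e k) (x j) : ℂ).re + ρ k * (inner ℂ (e k) (x j) : ℂ).im := by
        simp [sub_mul, Complex.mul_re, Complex.mul_im]
      rw [this]
      have t1 : r k ^ 2 * ‖x j‖ ≤ r k * (inner ℂ (e k) (x j) : ℂ).re := by
        have := mul_le_mul_of_nonneg_left (h₁ j k) (hr k)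
        calc r k ^ 2 * ‖x j‖ = r k * (r k * ‖x j‖) := by ring
        _ ≤ _ := this
      have t2 : ρ k ^ 2 * ‖x j‖ ≤ ρ k * (inner ℂ (e k) (x j) : ℂ).im := by
        have := mul_le_mul_of_nonneg_left (h₂ j k) (hρ k)
        calc ρ k ^ 2 * ‖x j‖ = ρ k * (ρ k * ‖x j‖) := by ring
        _ ≤ _ := this
      calc (r k ^ 2 + ρ k ^ 2) * ‖x j‖ = r k ^ 2 * ‖x j‖ + ρ k ^ 2 * ‖x j‖ := by ring
      _ ≤ _ := add_le_add t1 t2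
    have : (inner ℂ v T : ℂ) = ∑ j, inner ℂ v (x j) := by rw [hT, inner_sum]
    rw [this, Complex.re_sum, hL, Finset.mul_sum]
    exact Finset.sum_le_sum fun j _ => hvx j
  constructor
  · -- forward
    intro heq
    -- ⟨v,T⟩ = ‖v‖ * ‖T‖ = S * L
    have hnormT : ‖T‖ = Real.sqrt S * L := heq.symm
    have hprod : ‖v‖ * ‖T‖ = S * L := by
      rw [hvnorm, hnormT, ← mul_assoc, Real.mul_self_sqrt hS.le]
    have habs : ‖(inner ℂ v T : ℂ)‖ ≤ S * L := by
      rw [← hprod]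
      exact norm_inner_le_norm v T
    have hre' : (inner ℂ v T : ℂ).re = S * L :=
      le_antisymm (le_trans (Complex.re_le_norm _) habs) hre
    have him : (inner ℂ v T : ℂ).im = 0 := by
      have h2 : ‖(inner ℂ v T : ℂ)‖ = S * L := by
        refine le_antisymm habs ?_
        rw [← hre']
        exact Complex.re_le_norm _
      have := Complex.sq_norm (inner ℂ v T : ℂ)
      rw [h2, Complex.normSq_apply, hre'] at this
      nlinarith [this]
    have hinner : (inner ℂ v T : ℂ) = (‖v‖ : ℂ) * ‖T‖ := by
      apply Complex.ext
      · simp [hre']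
        rw [hvnorm, hnormT]
        rw [← mul_assoc, Real.mul_self_sqrt hS.le]
      · simp [him]
    have key := inner_eq_norm_mul_iff.mp hinner
    -- (‖T‖:ℂ) • v = (‖v‖:ℂ) • T
    rw [hnormT, hvnorm] at key
    have hsq : Real.sqrt S ≠ 0 := by positivity
    have : ((Real.sqrt S : ℂ)) • ((L : ℂ) • v) = ((Real.sqrt S : ℂ)) • T := by
      rw [smul_smul]
      push_cast at key
      exact key
    have := smul_right_injective H (by exact_mod_cast hsq : (Real.sqrt S : ℂ) ≠ 0) this
    rw [← this]
  · -- backward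
    intro heq
    rw [heq, norm_smul, hvnorm, Complex.norm_real, Real.norm_eq_abs, abs_of_nonneg hL0]
    ring
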